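/- arXiv:1907.06603 — 5 statements merged into one kernel-verified Lean document; each statement's English description precedes it below -/
import Mathlib

section
/- Let R be a commutative ring and F ∈ R⟨⟨e₀,…,eₙ⟩⟩ an invertible series (i.e., its constant coefficient F_∅ is invertible in R). Writing F = F_∅ + Σⱼ Fⱼeⱼ, the abelianisation of the j-th component of F⁻¹ satisfies: (F⁻¹)_j-bar = −(1/F_∅) · F̄ⱼ / F̄, where the bar denotes the abelianisation map eᵢ ↦ sᵢ, and F̄ is invertible in R[[s₀,…,sₙ]]. -/
/-- The (concatenation) product of two noncommutative formal power series,
given by their coefficient functions on words. -/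
def convMul {α : Type*} {R : Type*} [CommRing R] (A B : List α → R) : List α → R :=
  fun w => ∑ k ∈ Finset.range (w.length + 1), A (w.take k) * B (w.drop k)

/-- The unit series `1`. -/
def deltaOne {α : Type*} {R : Type*} [CommRing R] : List α → R :=
  fun w => match w with
  | [] => 1
  | _ :: _ => 0

/-- The abelianisation of a noncommutative formal power series. -/
noncomputable def abel {R : Type*} [CommRing R] {m : ℕ} (F : List (Fin m) → R) :
    MvPowerSeries (Fin m) R :=
  fun d : Fin m →₀ ℕ =>
    ∑ g : Fin (d.sum fun _ k => k) → Fin m,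
      if ∀ i, (List.ofFn g).count i = d i then F (List.ofFn g) else 0

section Aux
variable {m : ℕ} {R : Type*} [CommRing R]

noncomputable def cnt (w : List (Fin m)) : Fin m →₀ ℕ :=
  Finsupp.equivFunOnFinite.symm (fun i => w.count i)

lemma cnt_apply (w : List (Fin m)) (i : Fin m) : cnt w i = w.count i := rfl

lemma cnt_append (u v : List (Fin m)) : cnt (u ++ v) = cnt u + cnt v := by
  ext i; simp [cnt_apply, List.count_append]

lemma sum_cnt (w : List (Fin m)) : ((cnt w).sum fun _ k => k) = w.length := by
  rw [Finsupp.sum_fintype _ _ (fun _ => rfl)]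
  induction w with
  | nil => simp [cnt_apply]
  | cons a t ih =>
      simp only [cnt_apply, List.count_cons, List.length_cons]
      rw [Finset.sum_add_distrib]
      simp only [← cnt_apply, ih]
      congr 1
      simp

def W (m N : ℕ) : Finset (List (Fin m)) :=
  (Finset.univ : Finset (Fin N → Fin m)).image List.ofFn

lemma mem_W {N : ℕ} {w : List (Fin m)} : w ∈ W m N ↔ w.length = N := by
  constructor
  · rintro hw
    obtain ⟨f, -, rfl⟩ := Finset.mem_image.mp hw
    simp
  · intro h
    subst h
    exact Finset.mem_image.mpr ⟨w.get, Finset.mem_univ _, List.ofFn_get w⟩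

lemma abel_apply (F : List (Fin m) → R) (d : Fin m →₀ ℕ) :
    abel F d = ∑ w ∈ W m (d.sum fun _ k => k), if cnt w = d then F w else 0 := by
  unfold abel W
  rw [Finset.sum_image (fun a _ b _ h => List.ofFn_injective h)]
  refine Finset.sum_congr rfl fun g _ => ?_
  congr 1
  simp only [eq_iff_iff]
  constructor
  · intro h; ext i; simpa [cnt_apply] using h i
  · intro h i; rw [← cnt_apply, h]

lemma abel_convMul (A B : List (Fin m) → R) :
    abel (convMul A B) = abel A * abel B := by
  ext d
  rw [MvPowerSeries.coeff_mul]
  show abel (convMul A B) d = _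
  rw [abel_apply]
  set N := d.sum (fun _ k => k) with hN
  have step1 : ∑ w ∈ W m N, (if cnt w = d then convMul A B w else 0)
      = ∑ k ∈ Finset.range (N + 1), ∑ w ∈ W m N,
          (if cnt w = d then A (w.take k) * B (w.drop k) else 0) := by
    rw [Finset.sum_comm]
    refine Finset.sum_congr rfl fun w hw => ?_
    by_cases h : cnt w = d
    · simp [h, convMul, mem_W.mp hw]
    · simp [h]
  rw [step1]
  -- step 3: per k, reindex words by split point
  have step3 : ∀ k ∈ Finset.range (N + 1),
      ∑ w ∈ W m N, (if cnt w = d then A (w.take k) * B (w.drop k) else 0)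
      = ∑ u ∈ W m k, ∑ v ∈ W m (N - k),
          (if cnt u + cnt v = d then A u * B v else 0) := by
    intro k hk
    have hkN : k ≤ N := Nat.lt_succ_iff.mp (Finset.mem_range.mp hk)
    rw [← Finset.sum_product']
    refine Finset.sum_nbij' (i := fun w => (w.take k, w.drop k))
      (j := fun p => p.1 ++ p.2) ?_ ?_ ?_ ?_ ?_
    · intro w hw
      have hlw := mem_W.mp hw
      refine Finset.mem_product.mpr ⟨mem_W.mpr ?_, mem_W.mpr ?_⟩
      · simp [hlw, hkN]
      · simp [hlw]
    · intro p hp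
      obtain ⟨h1, h2⟩ := Finset.mem_product.mp hp
      refine mem_W.mpr ?_
      simp [mem_W.mp h1, mem_W.mp h2, Nat.add_sub_cancel' hkN]
    · intro w hw
      exact List.take_append_drop k w
    · intro p hp
      obtain ⟨h1, h2⟩ := Finset.mem_product.mp hp
      have hl1 := mem_W.mp h1
      ext
      · simp [List.take_append, hl1]
      · simp [List.drop_append, hl1]
    · intro w hw
      have : cnt w = cnt (w.take k) + cnt (w.drop k) := by
        conv_lhs => rw [← List.take_append_drop k w, cnt_append]
      rw [this]
  rw [Finset.sum_congr rfl step3]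
  -- now handle the RHS
  have stepR : ∀ p ∈ Finset.HasAntidiagonal.antidiagonal d,
      (MvPowerSeries.coeff p.1) (abel A) * (MvPowerSeries.coeff p.2) (abel B)
      = ∑ k ∈ Finset.range (N + 1), ∑ u ∈ W m k, ∑ v ∈ W m (N - k),
          (if cnt u = p.1 ∧ cnt v = p.2 then A u * B v else 0) := by
    intro p hp
    have hpd : p.1 + p.2 = d := Finset.HasAntidiagonal.mem_antidiagonal.mp hp
    have hsum : (p.1.sum fun _ k => k) + (p.2.sum fun _ k => k) = N := by
      rw [hN, ← hpd, Finsupp.sum_add_index' (fun _ => rfl) (fun _ _ _ => rfl)]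
    show (abel A p.1) * (abel B p.2) = _
    rw [abel_apply, abel_apply, Finset.sum_mul_sum]
    have hmerge : ∀ u v, ((if cnt u = p.1 then A u else 0) * (if cnt v = p.2 then B v else 0))
        = (if cnt u = p.1 ∧ cnt v = p.2 then A u * B v else 0) := by
      intro u v
      split_ifs with h1 h2 h3 <;> simp_all
    simp only [hmerge]
    have h2s : (p.2.sum fun _ k => k) = N - (p.1.sum fun _ k => k) := by omega
    rw [h2s]
    symm
    apply Finset.sum_eq_single_of_mem (p.1.sum fun _ k => k)
    · exact Finset.mem_range.mpr (Nat.lt_succ_of_le (Nat.le.intro hsum))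
    · intro k hk hne
      refine Finset.sum_eq_zero fun u hu => Finset.sum_eq_zero fun v hv => ?_
      rw [if_neg]
      rintro ⟨h1, h2⟩
      apply hne
      rw [← mem_W.mp hu, ← sum_cnt u, h1]
  rw [Finset.sum_congr rfl stepR]
  conv_rhs => rw [Finset.sum_comm]
  refine Finset.sum_congr rfl fun k hk => ?_
  conv_rhs => rw [Finset.sum_comm]
  refine Finset.sum_congr rfl fun u hu => ?_
  conv_rhs => rw [Finset.sum_comm]
  refine Finset.sum_congr rfl fun v hv => ?_
  symm
  by_cases hc : cnt u + cnt v = d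
  · rw [if_pos hc]
    refine (Finset.sum_eq_single_of_mem (cnt u, cnt v)
      (Finset.HasAntidiagonal.mem_antidiagonal.mpr hc) ?_).trans (by simp)
    intro p hp hne
    rw [if_neg]
    rintro ⟨h1, h2⟩
    exact hne (Prod.ext h1.symm h2.symm)
  · rw [if_neg hc]
    refine Finset.sum_eq_zero fun p hp => ?_
    rw [if_neg]
    rintro ⟨h1, h2⟩
    exact hc (by rw [h1, h2, Finset.HasAntidiagonal.mem_antidiagonal.mp hp])

lemma abel_one : abel (deltaOne : List (Fin m) → R) = 1 := by
  ext d
  rw [MvPowerSeries.coeff_one]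
  show abel deltaOne d = _
  rw [abel_apply]
  by_cases hd : d = 0
  · subst hd
    have h0 : (Finsupp.sum (0 : Fin m →₀ ℕ) fun _ k => k) = 0 := by simp
    rw [if_pos rfl, h0]
    have hW : W m 0 = {[]} := by
      ext w; simp [mem_W, List.length_eq_zero_iff]
    have hc : cnt ([] : List (Fin m)) = 0 := by ext i; simp [cnt_apply]
    rw [hW]
    simp [deltaOne, hc]
  · rw [if_neg hd]
    refine Finset.sum_eq_zero fun w hw => ?_
    match w with
    | [] =>
        rw [if_neg]
        intro h
        exact hd (by rw [← h]; ext i; simp [cnt_apply])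
    | a :: t => simp [deltaOne]

lemma abel_cmul (c : R) (F : List (Fin m) → R) :
    abel (fun w => c * F w) = MvPowerSeries.C (σ := Fin m) (R := R) c * abel F := by
  ext d
  rw [MvPowerSeries.coeff_C_mul]
  show abel (fun w => c * F w) d = c * abel F d
  rw [abel_apply, abel_apply, Finset.mul_sum]
  refine Finset.sum_congr rfl fun w hw => ?_
  split_ifs <;> simp
end Aux

/-- if `F` is invertible (its constant coefficient `F_∅` is a unit in `R`),
with (two-sided) inverse `G = F⁻¹`, then the abelianisation `F̄` is invertible in
`R[[s₀,…,sₙ]]` and `(F⁻¹)ⱼ-bar = −(1/F_∅) · F̄ⱼ / F̄`, equivalently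
`(F⁻¹)ⱼ-bar · F̄ = −(1/F_∅) · F̄ⱼ`. -/
theorem stmt10 {R : Type*} [CommRing R] {n : ℕ}
    (F G : List (Fin (n + 1)) → R) (hu : IsUnit (F []))
    (hFG : convMul F G = deltaOne) (hGF : convMul G F = deltaOne) (j : Fin (n + 1)) :
    IsUnit (abel F) ∧
      abel (fun w => G (w ++ [j])) * abel F =
        -(MvPowerSeries.C (σ := Fin (n + 1)) (R := R) (Ring.inverse (F []))) *
          abel (fun w => F (w ++ [j])) := by
  have h1 : abel G * abel F = 1 := by rw [← abel_convMul, hGF, abel_one]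
  have h2 : abel F * abel G = 1 := by rw [← abel_convMul, hFG, abel_one]
  refine ⟨IsUnit.of_mul_eq_one _ h2, ?_⟩
  -- key pointwise identity
  have hGj : (fun w => G (w ++ [j]))
      = fun w => (-(Ring.inverse (F []))) * convMul G (fun u => F (u ++ [j])) w := by
    funext w
    have h0 : convMul G F (w ++ [j]) = 0 := by
      rw [hGF]; cases w <;> rfl
    have hsplit : convMul G F (w ++ [j])
        = convMul G (fun u => F (u ++ [j])) w + G (w ++ [j]) * F [] := by
      unfold convMul
      rw [List.length_append, List.length_singleton, Finset.sum_range_succ]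
      congr 1
      · refine Finset.sum_congr rfl fun k hk => ?_
        have hkw : k ≤ w.length := Nat.lt_succ_iff.mp (Finset.mem_range.mp hk)
        rw [List.take_append, List.drop_append]
        have : k - w.length = 0 := by omega
        rw [this]
        simp
      · have h1 : w.length + 1 = (w ++ [j]).length := by simp
        rw [h1, List.take_length, List.drop_length]
    have key : G (w ++ [j]) * F [] = -(convMul G (fun u => F (u ++ [j])) w) := by
      rw [hsplit] at h0; linear_combination h0
    calc G (w ++ [j]) = G (w ++ [j]) * (F [] * Ring.inverse (F [])) := by
          rw [Ring.mul_inverse_cancel _ hu, mul_one]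
      _ = (G (w ++ [j]) * F []) * Ring.inverse (F []) := by ring
      _ = -(Ring.inverse (F [])) * convMul G (fun u => F (u ++ [j])) w := by
          rw [key]; ring
  rw [hGj, abel_cmul, abel_convMul, map_neg]
  have h3 : abel G * abel (fun u => F (u ++ [j])) * abel F
      = abel (fun u => F (u ++ [j])) * (abel G * abel F) := by ring
  rw [mul_assoc, h3, h1, mul_one]
end

section
/- Let R be a commutative ring and F ∈ R⟨⟨e₀,…,eₙ⟩⟩. Then the abelianisation of Fⱼ equals Σ_{m₀,…,mₙ ≥ 0} F( [e₀^{⧢m₀} ⧢ ⋯ ⧢ eₙ^{⧢mₙ}] eⱼ ) · (s₀^{m₀}/m₀!) ⋯ (sₙ^{mₙ}/mₙ!), where ⧢ denotes the shuffle product, F(w) denotes the (linearly extended) coefficient of words w in F, and [w]eⱼ denotes right-concatenation of eⱼ. -/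
/-- The shuffle product of two words, as a multiset of words. -/
def shuffle {α : Type*} : List α → List α → Multiset (List α)
  | [], v => {v}
  | u, [] => {u}
  | a :: u, b :: v =>
      ((shuffle u (b :: v)).map fun w => a :: w) + ((shuffle (a :: u) v).map fun w => b :: w)
  termination_by u v => u.length + v.length

/-- Shuffle product, extended bilinearly to (multisets of) words. -/
def mshuffle {α : Type*} (s t : Multiset (List α)) : Multiset (List α) :=
  s.bind fun u => t.bind fun v => shuffle u v

/-- The `m`-th shuffle power `u^{⧢m}` of a word `u`. -/
def shufflePow {α : Type*} (u : List α) : ℕ → Multiset (List α)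
  | 0 => {[]}
  | k + 1 => mshuffle {u} (shufflePow u k)

/-- The linear combination of words `e₀^{⧢m₀} ⧢ ⋯ ⧢ e_{m-1}^{⧢m_{m-1}}` attached to a
monomial `d`. -/
def bigShuffle {m : ℕ} (d : Fin m →₀ ℕ) : Multiset (List (Fin m)) :=
  (List.finRange m).foldr (fun i acc => mshuffle (shufflePow [i] (d i)) acc) {[]}

lemma shuffle_nil_left {α : Type*} (v : List α) : shuffle [] v = {v} := by
  cases v <;> simp [shuffle]

lemma shuffle_nil_right {α : Type*} (u : List α) : shuffle u [] = {u} := by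
  cases u <;> simp [shuffle]

lemma shuffle_cons_cons {α : Type*} (a b : α) (u v : List α) :
    shuffle (a :: u) (b :: v) =
      ((shuffle u (b :: v)).map fun w => a :: w) + ((shuffle (a :: u) v).map fun w => b :: w) := by
  rw [shuffle]

lemma count_nil_map {α : Type*} [DecidableEq α] (a : α) (s : Multiset (List α)) :
    Multiset.count [] (s.map (a :: ·)) = 0 := by
  rw [Multiset.count_eq_zero]
  intro hmem
  obtain ⟨u, -, hu⟩ := Multiset.mem_map.1 hmem
  simp at hu

lemma count_cons_map {α : Type*} [DecidableEq α] (c a : α) (w : List α)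
    (s : Multiset (List α)) :
    Multiset.count (c :: w) (s.map (a :: ·)) = if c = a then Multiset.count w s else 0 := by
  split_ifs with hca
  · subst hca
    exact Multiset.count_map_eq_count' _ _ (fun x y hxy => by simpa using hxy) _
  · rw [Multiset.count_eq_zero]
    intro hmem
    obtain ⟨u, -, hu⟩ := Multiset.mem_map.1 hmem
    exact hca (List.cons.injEq .. ▸ hu).1.symm

lemma count_shuffle_replicate_aux {α : Type*} [DecidableEq α] (a : α) :
    ∀ (N : ℕ) (k : ℕ) (v : List α), k + v.length ≤ N → a ∉ v → ∀ w : List α,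
      Multiset.count w (shuffle (List.replicate k a) v) =
        if w.count a = k ∧ w.filter (· ≠ a) = v then 1 else 0 := by
  intro N
  induction N with
  | zero =>
    intro k v h hv w
    obtain ⟨rfl, rfl⟩ : k = 0 ∧ v = [] := by
      constructor
      · omega
      · cases v with
        | nil => rfl
        | cons b v => simp at h
    rcases w with _ | ⟨c, w⟩
    · simp [shuffle_nil_left]
    · rw [List.replicate_zero, shuffle_nil_left, Multiset.count_singleton, if_neg (by simp),
        if_neg]
      rintro ⟨h1, h2⟩
      have hc : c = a := by
        by_contra hca
        have : c ∈ List.filter (fun x => decide (x ≠ a)) (c :: w) := by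
          simp [List.mem_filter, hca]
        rw [h2] at this; simp at this
      subst hc
      simp [List.count_cons_self] at h1
  | succ N ih =>
    intro k v h hv w
    match k, v with
    | 0, v =>
      rw [List.replicate_zero, shuffle_nil_left, Multiset.count_singleton]
      by_cases hw : w = v
      · subst hw
        rw [if_pos rfl, if_pos]
        exact ⟨List.count_eq_zero.2 hv, List.filter_eq_self.2 fun b hb => by
          simp only [ne_eq, decide_eq_true_eq]; rintro rfl; exact hv hb⟩
      · rw [if_neg hw, if_neg]
        rintro ⟨h1, h2⟩
        apply hw
        rw [← h2]
        symm
        apply List.filter_eq_self.2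
        intro b hb
        simp only [ne_eq, decide_eq_true_eq]
        rintro rfl
        exact absurd (List.count_eq_zero.1 h1 hb) id
    | (k + 1), [] =>
      rw [shuffle_nil_right, Multiset.count_singleton]
      by_cases hw : w = List.replicate (k + 1) a
      · subst hw
        rw [if_pos rfl, if_pos]
        constructor
        · simp [List.count_replicate]
        · apply List.filter_eq_nil_iff.2
          intro b hb
          simp [List.eq_of_mem_replicate hb]
      · rw [if_neg hw, if_neg]
        rintro ⟨h1, h2⟩
        apply hw
        apply List.eq_replicate_iff.2
        have hall : ∀ b ∈ w, b = a := by
          intro b hb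
          by_contra hba
          have : b ∈ List.filter (fun x => decide (x ≠ a)) w := by
            simp [List.mem_filter, hba, hb]
          rw [h2] at this; simp at this
        refine ⟨?_, hall⟩
        calc w.length = w.count a := by
              rw [List.count_eq_length.2 fun b hb => (hall b hb).symm]
          _ = k + 1 := h1
    | (k + 1), (b :: v) =>
      have hab : a ≠ b := fun hh => hv (hh ▸ (List.mem_cons_self : a ∈ a :: v))
      have hav : a ∉ v := fun hh => hv (List.mem_cons_of_mem b hh)
      rw [List.replicate_succ, shuffle_cons_cons, Multiset.count_add]
      rcases w with _ | ⟨c, w⟩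
      · rw [count_nil_map, count_nil_map, if_neg]
        rintro ⟨h1, -⟩
        simp at h1
      · have ih2 := ih (k + 1) v (by simp at h ⊢; omega) hav w
        rw [List.replicate_succ] at ih2
        rw [count_cons_map, count_cons_map,
          ih k (b :: v) (by simp at h ⊢; omega) hv, ih2]
        by_cases hca : c = a
        · subst hca
          rw [if_pos rfl, if_neg hab, add_zero]
          have : List.filter (fun x => decide (x ≠ c)) (c :: w)
              = List.filter (fun x => decide (x ≠ c)) w := by simp
          rw [this, List.count_cons_self]
          congr 1
          simp only [eq_iff_iff, and_congr_left_iff]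
          intro _
          omega
        · rw [if_neg hca]
          have hfil : List.filter (fun x => decide (x ≠ a)) (c :: w)
              = c :: List.filter (fun x => decide (x ≠ a)) w := by simp [hca]
          have hcnt : (c :: w).count a = w.count a := List.count_cons_of_ne hca
          rw [hfil, hcnt, zero_add]
          by_cases hcb : c = b
          · subst hcb
            rw [if_pos rfl]
            congr 1
            simp only [eq_iff_iff, and_congr_right_iff]
            intro _
            simp
          · rw [if_neg hcb, if_neg]
            rintro ⟨-, h2⟩
            exact hcb (List.cons.injEq .. ▸ h2).1

lemma bind_nsmul {α β : Type*} (n : ℕ) (s : Multiset α) (f : α → Multiset β) :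
    (n • s).bind f = n • s.bind f := by
  induction n with
  | zero => simp
  | succ n ih => rw [succ_nsmul, succ_nsmul, Multiset.add_bind, ih]

lemma shuffle_single_replicate {α : Type*} (a : α) (k : ℕ) :
    shuffle [a] (List.replicate k a) = (k + 1) • {List.replicate (k + 1) a} := by
  induction k with
  | zero => simp [shuffle_nil_right]
  | succ k ih =>
    rw [List.replicate_succ, shuffle_cons_cons, shuffle_nil_left, ih, Multiset.map_nsmul]
    simp only [Multiset.map_singleton, ← List.replicate_succ]
    rw [add_comm, ← succ_nsmul]

lemma shufflePow_single {α : Type*} (a : α) (k : ℕ) :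
    shufflePow [a] k = k.factorial • ({List.replicate k a} : Multiset (List α)) := by
  induction k with
  | zero => simp [shufflePow]
  | succ k ih =>
    rw [shufflePow, ih, mshuffle, Multiset.singleton_bind, bind_nsmul,
      Multiset.singleton_bind, shuffle_single_replicate, Nat.factorial_succ, ← smul_smul,
      smul_comm]

lemma count_filter_ne {α : Type*} [DecidableEq α] (a i : α) (w : List α) :
    (w.filter (fun x => decide (x ≠ a))).count i = if i = a then 0 else w.count i := by
  induction w with
  | nil => simp
  | cons c w ih =>
    by_cases hca : c = a <;> by_cases hia : i = a <;>
      simp_all [List.filter_cons, List.count_cons] <;> exact fun h => hia h.symm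

lemma sum_map_indicator {β : Type*} [DecidableEq β] (s : Multiset β) (b : β) :
    (s.map fun v => if b = v then (1 : ℕ) else 0).sum = s.count b := by
  induction s using Multiset.induction_on with
  | empty => simp
  | cons a s ih =>
    rw [Multiset.map_cons, Multiset.sum_cons, ih, Multiset.count_cons]
    by_cases hba : b = a <;> simp [hba, eq_comm, add_comm]

lemma count_foldr {m : ℕ} (d : Fin m →₀ ℕ) :
    ∀ L : List (Fin m), L.Nodup → ∀ w : List (Fin m),
      Multiset.count w (L.foldr (fun i acc => mshuffle (shufflePow [i] (d i)) acc) {[]}) =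
        if ∀ i, w.count i = if i ∈ L then d i else 0 then
          (L.map fun i => (d i).factorial).prod
        else 0 := by
  intro L
  induction L with
  | nil =>
    intro _ w
    simp only [List.foldr_nil, Multiset.count_singleton, List.not_mem_nil, if_false,
      List.map_nil, List.prod_nil]
    by_cases hw : w = []
    · subst hw
      simp
    · rw [if_neg hw, if_neg]
      intro hcond
      rcases w with _ | ⟨c, w'⟩
      · exact hw rfl
      · have := hcond c
        simp [List.count_cons_self] at this
  | cons a L ih =>
    intro hnd w
    obtain ⟨hna, hndL⟩ := List.nodup_cons.1 hnd
    simp only [List.foldr_cons]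
    set k := d a with hk
    set acc := L.foldr (fun i acc => mshuffle (shufflePow [i] (d i)) acc) {[]} with hacc
    rw [mshuffle, shufflePow_single, bind_nsmul, Multiset.count_nsmul,
      Multiset.singleton_bind, Multiset.count_bind]
    have hmap : acc.map (fun v => Multiset.count w (shuffle (List.replicate k a) v)) =
        acc.map (fun v => if w.count a = k ∧ w.filter (· ≠ a) = v then 1 else 0) := by
      apply Multiset.map_congr rfl
      intro v hv
      have hcv : Multiset.count v acc ≠ 0 := Multiset.count_ne_zero.2 hv
      rw [ih hndL v] at hcv
      have hcond : ∀ i, v.count i = if i ∈ L then d i else 0 := by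
        by_contra hc
        rw [if_neg hc] at hcv
        exact hcv rfl
      have hav : a ∉ v := by
        apply List.count_eq_zero.1
        rw [hcond a, if_neg hna]
      exact count_shuffle_replicate_aux a (k + v.length) k v le_rfl hav w
    rw [hmap]
    by_cases hwa : w.count a = k
    · have : acc.map (fun v => if w.count a = k ∧ w.filter (· ≠ a) = v then (1:ℕ) else 0) =
          acc.map (fun v => if w.filter (· ≠ a) = v then (1:ℕ) else 0) := by
        apply Multiset.map_congr rfl
        intro v _
        simp [hwa]
      rw [this, sum_map_indicator, ih hndL]
      by_cases hcondL : ∀ i, (w.filter (· ≠ a)).count i = if i ∈ L then d i else 0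
      · rw [if_pos hcondL, if_pos, List.map_cons, List.prod_cons]
        intro i
        rcases eq_or_ne i a with rfl | hia
        · rw [if_pos (List.mem_cons_self ..), hwa]
        · have := hcondL i
          rw [count_filter_ne, if_neg hia] at this
          rw [this]
          simp [List.mem_cons, hia]
      · rw [if_neg hcondL, if_neg, mul_zero]
        intro hcond
        apply hcondL
        intro i
        rcases eq_or_ne i a with rfl | hia
        · rw [count_filter_ne, if_pos rfl, if_neg hna]
        · rw [count_filter_ne, if_neg hia, hcond i]
          simp [List.mem_cons, hia]
    · have : acc.map (fun v => if w.count a = k ∧ w.filter (· ≠ a) = v then (1:ℕ) else 0) =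
          acc.map (fun _ => (0:ℕ)) := by
        apply Multiset.map_congr rfl
        intro v _
        simp [hwa]
      have hneg : ¬ ∀ i : Fin m, w.count i = if i ∈ a :: L then d i else 0 := by
        intro hcond
        exact hwa ((hcond a).trans (if_pos (List.mem_cons_self ..)))
      rw [this, if_neg hneg]
      simp

lemma count_bigShuffle {m : ℕ} (d : Fin m →₀ ℕ) (w : List (Fin m)) :
    Multiset.count w (bigShuffle d) =
      if ∀ i, w.count i = d i then ∏ i, (d i).factorial else 0 := by
  have h := count_foldr d (List.finRange m) (List.nodup_finRange m) w
  simp only [List.mem_finRange, if_true] at h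
  rw [bigShuffle, h, Fin.prod_univ_def]

lemma length_eq_sum_count {m : ℕ} (w : List (Fin m)) :
    w.length = ∑ i : Fin m, w.count i := by
  classical
  calc w.length = Multiset.card (↑w : Multiset (Fin m)) := by simp
    _ = ∑ i ∈ (↑w : Multiset (Fin m)).toFinset, Multiset.count i ↑w :=
        (Multiset.toFinset_sum_count_eq _).symm
    _ = ∑ i : Fin m, Multiset.count i (↑w : Multiset (Fin m)) := by
        apply Finset.sum_subset (Finset.subset_univ _)
        intro i _ hi
        exact Multiset.count_eq_zero.2 fun hmem => hi (Multiset.mem_toFinset.2 hmem)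
    _ = ∑ i : Fin m, w.count i := by simp

lemma exists_ofFn {m N : ℕ} (w : List (Fin m)) (h : w.length = N) :
    ∃ g : Fin N → Fin m, List.ofFn g = w := by
  subst h
  exact ⟨w.get, List.ofFn_get w⟩

/-- the abelianisation of `Fⱼ` equals
`Σ_{m₀,…,mₙ} F([e₀^{⧢m₀} ⧢ ⋯ ⧢ eₙ^{⧢mₙ}]eⱼ) · s₀^{m₀}/m₀! ⋯ sₙ^{mₙ}/mₙ!`,
stated coefficientwise: the coefficient of `abel Fⱼ` at a monomial `d` is
`(∏ᵢ 1/dᵢ!) · F((e₀^{⧢d₀} ⧢ ⋯ ⧢ eₙ^{⧢dₙ})eⱼ)` with `F` extended linearly. -/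
theorem stmt11 {R : Type*} [CommRing R] [Algebra ℚ R] {n : ℕ}
    (F : List (Fin (n + 1)) → R) (j : Fin (n + 1)) :
    ∀ d : Fin (n + 1) →₀ ℕ,
      MvPowerSeries.coeff d (abel fun w => F (w ++ [j])) =
        (∏ i : Fin (n + 1), algebraMap ℚ R (((d i).factorial : ℚ))⁻¹) *
          ((bigShuffle d).map fun w => F (w ++ [j])).sum := by

  intro d
  classical
  set F' : List (Fin (n + 1)) → R := fun w => F (w ++ [j]) with hF'
  set N := d.sum fun _ k => k with hN
  have hNsum : N = ∑ i : Fin (n + 1), d i := Finsupp.sum_fintype _ _ (fun _ => rfl)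
  set cond : List (Fin (n + 1)) → Prop := fun w => ∀ i, w.count i = d i with hcond
  -- LHS
  have hcoeff : MvPowerSeries.coeff d (abel F') =
      ∑ g : Fin N → Fin (n + 1),
        if cond (List.ofFn g) then F' (List.ofFn g) else 0 := rfl
  set S : Finset (List (Fin (n + 1))) :=
    Finset.image (fun g : Fin N → Fin (n + 1) => List.ofFn g) Finset.univ with hS
  have himg : ∑ g : Fin N → Fin (n + 1),
        (if cond (List.ofFn g) then F' (List.ofFn g) else 0) =
      ∑ w ∈ S, if cond w then F' w else 0 := by
    rw [hS, Finset.sum_image]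
    intro x _ y _ hxy
    exact List.ofFn_injective hxy
  have hfilter : ∑ w ∈ S, (if cond w then F' w else 0) =
      ∑ w ∈ S.filter cond, F' w := (Finset.sum_filter _ _).symm
  have hprodpos : (0 : ℕ) < ∏ i : Fin (n + 1), (d i).factorial :=
    Finset.prod_pos fun i _ => Nat.factorial_pos _
  have hsetseq : S.filter cond = (bigShuffle d).toFinset := by
    ext w
    simp only [Finset.mem_filter, Multiset.mem_toFinset, hS, Finset.mem_image,
      Finset.mem_univ, true_and]
    constructor
    · rintro ⟨-, hcw⟩
      rw [← Multiset.count_ne_zero, count_bigShuffle, if_pos hcw]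
      omega
    · intro hmem
      have hcnt := Multiset.count_ne_zero.2 hmem
      rw [count_bigShuffle] at hcnt
      have hcw : cond w := by
        by_contra hc
        rw [if_neg hc] at hcnt
        exact hcnt rfl
      refine ⟨?_, hcw⟩
      apply exists_ofFn
      rw [length_eq_sum_count, hNsum]
      exact Finset.sum_congr rfl fun i _ => hcw i
  -- RHS
  have hRHS : ((bigShuffle d).map F').sum =
      ∑ w ∈ (bigShuffle d).toFinset, (∏ i : Fin (n + 1), (d i).factorial) • F' w := by
    rw [Finset.sum_multiset_map_count]
    apply Finset.sum_congr rfl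
    intro w hw
    have hcnt := Multiset.count_ne_zero.2 (Multiset.mem_toFinset.1 hw)
    rw [count_bigShuffle] at hcnt ⊢
    split_ifs with hc
    · rfl
    · rw [if_neg hc] at hcnt
      exact absurd rfl hcnt
  rw [hcoeff, himg, hfilter, hsetseq, hRHS]
  rw [← Finset.smul_sum, nsmul_eq_mul, ← mul_assoc, Nat.cast_prod]
  rw [← Finset.prod_mul_distrib]
  have hone : ∀ i : Fin (n + 1),
      algebraMap ℚ R (((d i).factorial : ℚ))⁻¹ * (((d i).factorial : ℕ) : R) = 1 := by
    intro i
    rw [← map_natCast (algebraMap ℚ R) ((d i).factorial), ← map_mul,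
      inv_mul_cancel₀ (Nat.cast_ne_zero.2 (Nat.factorial_ne_zero _)), map_one]
  rw [Finset.prod_congr rfl fun i _ => hone i, Finset.prod_const_one, one_mul]
end

section
/- For Re(c) > Re(b) > 0 and y ∈ ℂ with y ∉ [1,∞), setting 𝓕(a,b,c;y) = ∫₀¹ x^b (1−x)^{c−b}(1−yx)^{−a} dx/(x(1−x)), one has the contiguity relation 𝓕(a,b,c;y) = (c/b)·𝓕(a,b+1,c+1;y) − (a/b)·y·𝓕(a+1,b+1,c+2;y). -/
/-- `𝓕(a,b,c;y) = ∫₀¹ x^b (1−x)^{c−b} (1−yx)^{−a} dx/(x(1−x))`, with principal branches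
(which for `y ∉ [1,∞)` agree with the branches determined by
`log(1−yx) = ∫₀^x d log(1−yu)` along `(0,1)`). -/
noncomputable def calF (a b c y : ℂ) : ℂ :=
  ∫ x in (0:ℝ)..1,
    (x : ℂ) ^ b * (1 - (x : ℂ)) ^ (c - b) * (1 - y * (x : ℂ)) ^ (-a) /
      ((x : ℂ) * (1 - (x : ℂ)))

namespace Stmt13Aux

open Complex Set MeasureTheory intervalIntegral

/-- auxiliary clean integral -/
noncomputable def auxG (y p q r : ℂ) : ℂ :=
  ∫ x in (0:ℝ)..1, (x : ℂ) ^ p * (1 - (x : ℂ)) ^ q * (1 - y * (x : ℂ)) ^ r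

variable {y : ℂ}

lemma slit (hy : ∀ t : ℝ, 1 ≤ t → y ≠ (t : ℂ)) {x : ℝ} (hx : x ∈ Icc (0:ℝ) 1) :
    (1 - y * (x : ℂ)) ∈ Complex.slitPlane := by
  rw [Complex.mem_slitPlane_iff]
  by_cases him : y.im = 0
  · left
    have hyre : y.re < 1 := by
      by_contra h
      push_neg at h
      exact hy y.re h (Complex.ext (by simp) (by simp [him]))
    have h1 : (1 - y * (x : ℂ)).re = 1 - y.re * x := by
      simp [Complex.sub_re, Complex.mul_re, him]
    rw [h1]
    rcases lt_or_eq_of_le hx.2 with h2 | h2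
    · nlinarith [hx.1, mul_nonneg hx.1 (sub_pos.2 hyre).le]
    · subst h2; nlinarith
  · rcases eq_or_lt_of_le hx.1 with h0 | h0
    · left; simp [← h0]
    · right
      have h1 : (1 - y * (x : ℂ)).im = -(y.im * x) := by
        simp [Complex.sub_im, Complex.mul_im]
      rw [h1]
      simp only [neg_ne_zero]
      exact mul_ne_zero him (ne_of_gt h0)

lemma factor_ne_zero (hy : ∀ t : ℝ, 1 ≤ t → y ≠ (t : ℂ)) {x : ℝ}
    (hx : x ∈ Icc (0:ℝ) 1) : 1 - y * (x : ℂ) ≠ 0 :=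
  Complex.slitPlane_ne_zero (slit hy hx)

lemma contOn (hy : ∀ t : ℝ, 1 ≤ t → y ≠ (t : ℂ)) (r : ℂ) :
    ContinuousOn (fun x : ℝ => (1 - y * (x : ℂ)) ^ r) (Icc (0:ℝ) 1) := by
  intro x hx
  have hcont : ContinuousAt (fun x : ℝ => 1 - y * (x : ℂ)) x :=
    (continuous_const.sub (continuous_const.mul Complex.continuous_ofReal)).continuousAt
  exact (hcont.cpow continuousAt_const (slit hy hx)).continuousWithinAt

lemma integrable' (hy : ∀ t : ℝ, 1 ≤ t → y ≠ (t : ℂ)) {p q : ℂ}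
    (hp : -1 < p.re) (hq : -1 < q.re) (r : ℂ) :
    IntervalIntegrable (fun x : ℝ => (x : ℂ) ^ p * (1 - (x : ℂ)) ^ q * (1 - y * (x : ℂ)) ^ r)
      volume 0 1 := by
  have h := (Complex.betaIntegral_convergent (u := p + 1) (v := q + 1)
      (by simp; linarith) (by simp; linarith)).mul_continuousOn
      ((contOn hy r).mono (by rw [uIcc_of_le (zero_le_one (α := ℝ))]))
  simpa using h

lemma calF_eq (a' b' c' : ℂ) : calF a' b' c' y = auxG y (b' - 1) (c' - b' - 1) (-a') := by
  rw [calF, auxG]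
  refine intervalIntegral.integral_congr_ae ?_
  have hae : ∀ᵐ x : ℝ, x ≠ (1:ℝ) := by
    have h : (volume : Measure ℝ) {(1:ℝ)} = 0 := measure_singleton 1
    exact MeasureTheory.ae_iff.2 (by simpa using h)
  filter_upwards [hae] with x hx1 hx
  rw [uIoc_of_le (zero_le_one (α := ℝ))] at hx
  have hx0 : (x : ℂ) ≠ 0 := by exact_mod_cast ne_of_gt hx.1
  have hx1' : (1 : ℂ) - x ≠ 0 := by
    rw [sub_ne_zero]
    exact_mod_cast (Ne.symm hx1)
  rw [Complex.cpow_sub b' 1 hx0, Complex.cpow_one, Complex.cpow_sub (c' - b') 1 hx1', Complex.cpow_one]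
  field_simp

lemma auxG_split (hy : ∀ t : ℝ, 1 ≤ t → y ≠ (t : ℂ)) {p q : ℂ}
    (hp : -1 < p.re) (hq : -1 < q.re) (r : ℂ) :
    auxG y p q r = auxG y (p + 1) q r + auxG y p (q + 1) r := by
  have i1 : IntervalIntegrable
      (fun x : ℝ => (x : ℂ) ^ (p + 1) * (1 - (x : ℂ)) ^ q * (1 - y * (x : ℂ)) ^ r)
      volume 0 1 := integrable' hy (by simp; linarith) hq r
  have i2 : IntervalIntegrable
      (fun x : ℝ => (x : ℂ) ^ p * (1 - (x : ℂ)) ^ (q + 1) * (1 - y * (x : ℂ)) ^ r)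
      volume 0 1 := integrable' hy hp (by simp; linarith) r
  rw [auxG, auxG, auxG, ← intervalIntegral.integral_add i1 i2]
  refine intervalIntegral.integral_congr_ae ?_
  have hae : ∀ᵐ x : ℝ, x ≠ (1:ℝ) := by
    have h : (volume : Measure ℝ) {(1:ℝ)} = 0 := measure_singleton 1
    exact MeasureTheory.ae_iff.2 (by simpa using h)
  filter_upwards [hae] with x hx1 hx
  rw [uIoc_of_le (zero_le_one (α := ℝ))] at hx
  have hx0 : (x : ℂ) ≠ 0 := by exact_mod_cast ne_of_gt hx.1
  have hx1' : (1 : ℂ) - x ≠ 0 := by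
    rw [sub_ne_zero]
    exact_mod_cast (Ne.symm hx1)
  rw [Complex.cpow_add _ _ hx0, Complex.cpow_one, Complex.cpow_add _ _ hx1', Complex.cpow_one]
  ring

lemma auxG_ftc (hy : ∀ t : ℝ, 1 ≤ t → y ≠ (t : ℂ)) {u v : ℂ}
    (hu : 0 < u.re) (hv : 0 < v.re) (a : ℂ) :
    u * auxG y (u - 1) v (-a) - v * auxG y u (v - 1) (-a)
      + a * y * auxG y u v (-a - 1) = 0 := by
  set F : ℝ → ℂ := fun x => (x : ℂ) ^ u * (1 - (x : ℂ)) ^ v * (1 - y * (x : ℂ)) ^ (-a) with hF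
  have hc : ContinuousOn F (Icc 0 1) := by
    apply ContinuousOn.mul _ (contOn hy (-a))
    refine (continuousOn_of_forall_continuousAt fun x hx => ?_).mul
        (continuousOn_of_forall_continuousAt fun x hx => ?_)
    · refine (Complex.continuousAt_cpow_const_of_re_pos (Or.inl ?_) hu).comp
        Complex.continuous_ofReal.continuousAt
      rw [Complex.ofReal_re]; exact hx.1
    · refine (Complex.continuousAt_cpow_const_of_re_pos (Or.inl ?_) hv).comp
        (continuous_const.sub Complex.continuous_ofReal).continuousAt
      rw [Complex.sub_re, Complex.one_re, Complex.ofReal_re, sub_nonneg]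
      exact hx.2
  have hder : ∀ x : ℝ, x ∈ Ioo (0:ℝ) 1 → HasDerivAt F
      (u * ((x : ℂ) ^ (u - 1) * (1 - (x : ℂ)) ^ v * (1 - y * (x : ℂ)) ^ (-a))
        - v * ((x : ℂ) ^ u * (1 - (x : ℂ)) ^ (v - 1) * (1 - y * (x : ℂ)) ^ (-a))
        + a * y * ((x : ℂ) ^ u * (1 - (x : ℂ)) ^ v * (1 - y * (x : ℂ)) ^ (-a - 1))) x := by
    intro x hx
    have U : HasDerivAt (fun z : ℂ => z ^ u) (u * (x : ℂ) ^ (u - 1)) ↑x := by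
      have := @HasDerivAt.cpow_const _ _ _ u (hasDerivAt_id (x : ℂ)) (Or.inl ?_)
      · simpa using this
      · rw [id_eq, Complex.ofReal_re]; exact hx.1
    have V : HasDerivAt (fun z : ℂ => (1 - z) ^ v) (-v * (1 - (x : ℂ)) ^ (v - 1)) ↑x := by
      have A := @HasDerivAt.cpow_const _ _ _ v (hasDerivAt_id (1 - (x : ℂ))) (Or.inl ?_)
      swap
      · rw [id_eq, Complex.sub_re, Complex.one_re, Complex.ofReal_re, sub_pos]; exact hx.2
      simp_rw [id_eq] at A
      have B : HasDerivAt (fun z : ℂ => 1 - z) (-1) ↑x := (hasDerivAt_id (↑x : ℂ)).const_sub 1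
      rw [show -v * (1 - (x : ℂ)) ^ (v - 1) = v * (1 - ↑x) ^ (v - 1) * 1 * -1 by ring]
      exact HasDerivAt.comp (x : ℂ) A B
    have W : HasDerivAt (fun z : ℂ => (1 - y * z) ^ (-a))
        (a * y * (1 - y * (x : ℂ)) ^ (-a - 1)) ↑x := by
      have hin : HasDerivAt (fun z : ℂ => 1 - y * z) (-y) ↑x := by
        have h1 : HasDerivAt (fun z : ℂ => y * z) y ↑x := by
          simpa using (hasDerivAt_id (↑x : ℂ)).const_mul y
        simpa using h1.const_sub 1
      have := hin.cpow_const (c := -a) (slit hy ⟨hx.1.le, hx.2.le⟩)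
      convert this using 1
      ring
    convert ((U.mul V).mul W).comp_ofReal using 1
    · rfl
    · simp only [Pi.mul_apply]; ring
  have hu1 : -1 < (u - 1).re := by simp [Complex.sub_re]; linarith
  have hv1 : -1 < (v - 1).re := by simp [Complex.sub_re]; linarith
  have hu0 : -1 < u.re := by linarith
  have hv0 : -1 < v.re := by linarith
  have i1 := (integrable' hy hu1 hv0 (-a)).const_mul u
  have i2 := (integrable' hy hu0 hv1 (-a)).const_mul v
  have i3 := (integrable' hy hu0 hv0 (-a - 1)).const_mul (a * y)
  have h_int := (i1.sub i2).add i3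
  have int_ev := intervalIntegral.integral_eq_sub_of_hasDerivAt_of_le zero_le_one hc hder h_int
  have hu' : u ≠ 0 := by intro h; rw [h] at hu; simp at hu
  have hv' : v ≠ 0 := by intro h; rw [h] at hv; simp at hv
  have hF0 : F 0 = 0 := by simp [hF, Complex.zero_cpow hu']
  have hF1 : F 1 = 0 := by simp [hF, Complex.zero_cpow hv']
  rw [hF0, hF1, sub_zero] at int_ev
  rw [intervalIntegral.integral_add (i1.sub i2) i3, intervalIntegral.integral_sub i1 i2,
    intervalIntegral.integral_const_mul, intervalIntegral.integral_const_mul,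
    intervalIntegral.integral_const_mul] at int_ev
  rw [auxG, auxG, auxG]
  convert int_ev using 2 <;> ring

end Stmt13Aux

open Stmt13Aux in
/-- for `Re(c) > Re(b) > 0` and `y ∉ [1,∞)`,
`𝓕(a,b,c;y) = (c/b)·𝓕(a,b+1,c+1;y) − (a/b)·y·𝓕(a+1,b+1,c+2;y)`. -/
theorem stmt13 (a b c y : ℂ) (hb : 0 < b.re) (hbc : b.re < c.re)
    (hy : ∀ t : ℝ, 1 ≤ t → y ≠ (t : ℂ)) :
    calF a b c y =
      c / b * calF a (b + 1) (c + 1) y - a / b * y * calF (a + 1) (b + 1) (c + 2) y := by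
  have hcb : 0 < (c - b).re := by simp [Complex.sub_re]; linarith
  have hb0 : b ≠ 0 := by
    intro h; rw [h] at hb; simp at hb
  have e1 : calF a b c y = auxG y b (c - b - 1) (-a) + auxG y (b - 1) (c - b) (-a) := by
    have h := auxG_split hy (p := b - 1) (q := c - b - 1)
      (by simp [Complex.sub_re]; linarith) (by simp [Complex.sub_re]; linarith) (-a)
    rw [show b - 1 + 1 = b from by ring, show c - b - 1 + 1 = c - b from by ring] at h
    rw [calF_eq, h]
  have e2 : calF a (b + 1) (c + 1) y = auxG y b (c - b - 1) (-a) := by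
    rw [calF_eq, show b + 1 - 1 = b from by ring,
      show c + 1 - (b + 1) - 1 = c - b - 1 from by ring]
  have e3 : calF (a + 1) (b + 1) (c + 2) y = auxG y b (c - b) (-a - 1) := by
    rw [calF_eq, show b + 1 - 1 = b from by ring,
      show c + 2 - (b + 1) - 1 = c - b from by ring,
      show -(a + 1) = -a - 1 from by ring]
  have hftc := auxG_ftc hy hb hcb a
  rw [show c - b - 1 = c - b - 1 from rfl] at hftc
  rw [e1, e2, e3]
  field_simp
  linear_combination hftc
end

section
/- For Re(c) > Re(b) > 0 and y ∈ ℂ with y ∉ [1,∞), the function 𝓕(a,b,c;y) = ∫₀¹ x^b (1−x)^{c−b}(1−yx)^{−a} dx/(x(1−x)) satisfies the contiguity relation 𝓕(a,b,c;y) = (c/(c−b))·𝓕(a,b,c+1;y) + (a/(c−b))·y·𝓕(a+1,b+1,c+2;y). -/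
open MeasureTheory intervalIntegral Set Filter Topology Complex

lemma slit_aux {y : ℂ} (hy : ∀ t : ℝ, 1 ≤ t → y ≠ (t : ℂ)) {x : ℝ} (h0 : 0 ≤ x) (h1 : x ≤ 1) :
    (1 - y * (x : ℂ)) ∈ Complex.slitPlane := by
  rw [Complex.mem_slitPlane_iff]
  by_contra h
  push_neg at h
  obtain ⟨hre, him⟩ := h
  simp only [Complex.sub_im, Complex.one_im, Complex.mul_im, Complex.ofReal_re,
    Complex.ofReal_im, mul_zero, add_zero, zero_sub, neg_eq_zero, zero_add] at him
  simp only [Complex.sub_re, Complex.one_re, Complex.mul_re, Complex.ofReal_re,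
    Complex.ofReal_im, mul_zero, sub_zero] at hre
  rcases mul_eq_zero.mp him with hyim | hx0
  · -- y.im = 0
    have hx0 : x ≠ 0 := by
      intro hx; rw [hx] at hre; norm_num at hre
    have hxpos : 0 < x := lt_of_le_of_ne h0 (Ne.symm hx0)
    have hyre : 1 ≤ y.re := by nlinarith
    exact hy y.re hyre (Complex.ext (by simp) (by simp [hyim]))
  · rw [hx0] at hre; norm_num at hre

lemma cont_aux {y : ℂ} (hy : ∀ t : ℝ, 1 ≤ t → y ≠ (t : ℂ)) (a : ℂ) :
    ContinuousOn (fun x : ℝ => (1 - y * (x : ℂ)) ^ (-a)) (Set.uIcc (0:ℝ) 1) := by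
  intro x hx
  rw [Set.uIcc_of_le (by norm_num : (0:ℝ) ≤ 1)] at hx
  apply ContinuousAt.continuousWithinAt
  have hbase : ContinuousAt (fun x : ℝ => 1 - y * (x : ℂ)) x := by fun_prop
  exact hbase.cpow continuousAt_const (slit_aux hy hx.1 hx.2)

lemma integrable_aux {y : ℂ} (hy : ∀ t : ℝ, 1 ≤ t → y ≠ (t : ℂ)) (a b c : ℂ)
    (hb : 0 < b.re) (hbc : b.re < c.re) :
    IntervalIntegrable (fun x : ℝ =>
      (x : ℂ) ^ b * (1 - (x : ℂ)) ^ (c - b) * (1 - y * (x : ℂ)) ^ (-a) /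
        ((x : ℂ) * (1 - (x : ℂ)))) volume 0 1 := by
  have hcb : 0 < (c - b).re := by
    simp only [Complex.sub_re]; linarith
  have h1 : IntervalIntegrable (fun x : ℝ =>
      (x : ℂ) ^ (b - 1) * (1 - (x : ℂ)) ^ ((c - b) - 1) * (1 - y * (x : ℂ)) ^ (-a))
      volume 0 1 :=
    (Complex.betaIntegral_convergent hb hcb).mul_continuousOn (cont_aux hy a)
  apply h1.congr_ae
  have hne : ∀ᵐ x : ℝ ∂volume, x ≠ 1 := by
    rw [ae_iff]
    have hset : {x : ℝ | ¬ x ≠ 1} = {1} := by ext z; simp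
    rw [hset, Real.volume_singleton]
  filter_upwards [ae_restrict_mem measurableSet_uIoc,
    hne.filter_mono (MeasureTheory.ae_mono Measure.restrict_le_self)] with x hx hx1
  rw [Set.uIoc_of_le (by norm_num : (0:ℝ) ≤ 1)] at hx
  have hx0 : (x : ℂ) ≠ 0 := by exact_mod_cast ne_of_gt hx.1
  have hxlt : x < 1 := lt_of_le_of_ne hx.2 hx1
  have ht0 : (1 : ℂ) - (x : ℂ) ≠ 0 := by
    intro h
    have : (x : ℂ) = 1 := by linear_combination -h
    exact hx1 (by exact_mod_cast this)
  rw [Complex.cpow_sub _ _ hx0, Complex.cpow_sub _ _ ht0, Complex.cpow_one, Complex.cpow_one]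
  field_simp

lemma hasDeriv_aux {y : ℂ} (hy : ∀ t : ℝ, 1 ≤ t → y ≠ (t : ℂ)) (a b c : ℂ)
    {x : ℝ} (hx : x ∈ Set.Ioo (0:ℝ) 1) :
    HasDerivAt (fun t : ℝ => (t : ℂ) ^ b * (1 - (t : ℂ)) ^ (c - b) * (1 - y * (t : ℂ)) ^ (-a))
      (c * ((x : ℂ) ^ b * (1 - (x : ℂ)) ^ (c + 1 - b) * (1 - y * (x : ℂ)) ^ (-a) /
          ((x : ℂ) * (1 - (x : ℂ)))) +
        a * y * ((x : ℂ) ^ (b + 1) * (1 - (x : ℂ)) ^ (c + 2 - (b + 1)) *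
          (1 - y * (x : ℂ)) ^ (-(a + 1)) / ((x : ℂ) * (1 - (x : ℂ)))) -
        (c - b) * ((x : ℂ) ^ b * (1 - (x : ℂ)) ^ (c - b) * (1 - y * (x : ℂ)) ^ (-a) /
          ((x : ℂ) * (1 - (x : ℂ))))) x := by
  obtain ⟨hx0, hx1⟩ := hx
  have hxs : (x : ℂ) ∈ Complex.slitPlane := by
    rw [Complex.mem_slitPlane_iff]; left; simpa using hx0
  have hts : (1 - (x : ℂ)) ∈ Complex.slitPlane := by
    rw [Complex.mem_slitPlane_iff]; left; simp [hx1]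
  have hus : (1 - y * (x : ℂ)) ∈ Complex.slitPlane := slit_aux hy hx0.le hx1.le
  have hX : (x : ℂ) ≠ 0 := Complex.slitPlane_ne_zero hxs
  have hT : (1 : ℂ) - (x : ℂ) ≠ 0 := Complex.slitPlane_ne_zero hts
  have hU : (1 : ℂ) - y * (x : ℂ) ≠ 0 := Complex.slitPlane_ne_zero hus
  have d1 : HasDerivAt (fun t : ℝ => (t : ℂ) ^ b) (b * (x : ℂ) ^ (b - 1) * 1) x :=
    ((hasDerivAt_id ((x : ℝ) : ℂ)).cpow_const hxs).comp_ofReal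
  have d2 : HasDerivAt (fun t : ℝ => (1 - (t : ℂ)) ^ (c - b))
      ((c - b) * (1 - (x : ℂ)) ^ (c - b - 1) * (-1)) x :=
    (((hasDerivAt_id ((x : ℝ) : ℂ)).const_sub 1).cpow_const hts).comp_ofReal
  have d3 : HasDerivAt (fun t : ℝ => (1 - y * (t : ℂ)) ^ (-a))
      ((-a) * (1 - y * (x : ℂ)) ^ (-a - 1) * (-(y * 1))) x :=
    ((((hasDerivAt_id ((x : ℝ) : ℂ)).const_mul y).const_sub 1).cpow_const hus).comp_ofReal
  have D := (d1.mul d2).mul d3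
  refine D.congr_deriv ?_
  simp only [Pi.mul_apply]
  have r1 : ((x:ℝ):ℂ) ^ b = ((x:ℝ):ℂ) ^ (b - 1) * ((x:ℝ):ℂ) := by
    conv_lhs => rw [show b = b - 1 + 1 by ring]
    rw [Complex.cpow_add _ _ hX, Complex.cpow_one]
  have r2 : (1 - ((x:ℝ):ℂ)) ^ (c - b) = (1 - ((x:ℝ):ℂ)) ^ (c - b - 1) * (1 - ((x:ℝ):ℂ)) := by
    conv_lhs => rw [show c - b = c - b - 1 + 1 by ring]
    rw [Complex.cpow_add _ _ hT, Complex.cpow_one]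
  have r3 : (1 - y * ((x:ℝ):ℂ)) ^ (-a) =
      (1 - y * ((x:ℝ):ℂ)) ^ (-a - 1) * (1 - y * ((x:ℝ):ℂ)) := by
    conv_lhs => rw [show -a = -a - 1 + 1 by ring]
    rw [Complex.cpow_add _ _ hU, Complex.cpow_one]
  have r4 : (1 - ((x:ℝ):ℂ)) ^ (c + 1 - b) =
      (1 - ((x:ℝ):ℂ)) ^ (c - b - 1) * (1 - ((x:ℝ):ℂ)) * (1 - ((x:ℝ):ℂ)) := by
    conv_lhs => rw [show c + 1 - b = c - b - 1 + 1 + 1 by ring]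
    rw [Complex.cpow_add _ _ hT, Complex.cpow_add _ _ hT, Complex.cpow_one]
  have r5 : ((x:ℝ):ℂ) ^ (b + 1) = ((x:ℝ):ℂ) ^ (b - 1) * ((x:ℝ):ℂ) * ((x:ℝ):ℂ) := by
    conv_lhs => rw [show b + 1 = b - 1 + 1 + 1 by ring]
    rw [Complex.cpow_add _ _ hX, Complex.cpow_add _ _ hX, Complex.cpow_one]
  have r6 : (1 - ((x:ℝ):ℂ)) ^ (c + 2 - (b + 1)) =
      (1 - ((x:ℝ):ℂ)) ^ (c - b - 1) * (1 - ((x:ℝ):ℂ)) * (1 - ((x:ℝ):ℂ)) := by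
    conv_lhs => rw [show c + 2 - (b + 1) = c - b - 1 + 1 + 1 by ring]
    rw [Complex.cpow_add _ _ hT, Complex.cpow_add _ _ hT, Complex.cpow_one]
  have r7 : (1 - y * ((x:ℝ):ℂ)) ^ (-(a + 1)) = (1 - y * ((x:ℝ):ℂ)) ^ (-a - 1) := by
    rw [show -(a + 1) = -a - 1 by ring]
  rw [r4, r5, r6, r7, r1, r2, r3]
  field_simp
  ring

lemma tendsto_zero_aux {y : ℂ} (hy : ∀ t : ℝ, 1 ≤ t → y ≠ (t : ℂ)) (a b c : ℂ)
    (hb : 0 < b.re) :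
    Tendsto (fun t : ℝ => (t : ℂ) ^ b * (1 - (t : ℂ)) ^ (c - b) * (1 - y * (t : ℂ)) ^ (-a))
      (𝓝[>] (0:ℝ)) (𝓝 0) := by
  have hP : Tendsto (fun t : ℝ => (t : ℂ) ^ b) (𝓝[>] (0:ℝ)) (𝓝 0) := by
    rw [tendsto_zero_iff_norm_tendsto_zero]
    have heq : (fun t : ℝ => t ^ b.re) =ᶠ[𝓝[>] (0:ℝ)] fun t => ‖(t : ℂ) ^ b‖ := by
      filter_upwards [self_mem_nhdsWithin] with t ht
      rw [Complex.norm_cpow_eq_rpow_re_of_pos ht]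
    refine Tendsto.congr' heq ?_
    have h := (Real.continuousAt_rpow_const 0 b.re (Or.inr hb.le)).tendsto
    rw [Real.zero_rpow (ne_of_gt hb)] at h
    exact h.mono_left nhdsWithin_le_nhds
  have hQ : Tendsto (fun t : ℝ => (1 - (t : ℂ)) ^ (c - b)) (𝓝[>] (0:ℝ))
      (𝓝 ((1 - ((0:ℝ) : ℂ)) ^ (c - b))) := by
    have hbase : ContinuousAt (fun t : ℝ => 1 - (t : ℂ)) 0 := by fun_prop
    have h0 : (1 - ((0:ℝ):ℂ)) ∈ Complex.slitPlane := by
      rw [Complex.mem_slitPlane_iff]; left; simp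
    exact (hbase.cpow continuousAt_const h0).tendsto.mono_left nhdsWithin_le_nhds
  have hR : Tendsto (fun t : ℝ => (1 - y * (t : ℂ)) ^ (-a)) (𝓝[>] (0:ℝ))
      (𝓝 ((1 - y * ((0:ℝ) : ℂ)) ^ (-a))) := by
    have hbase : ContinuousAt (fun t : ℝ => 1 - y * (t : ℂ)) 0 := by fun_prop
    exact (hbase.cpow continuousAt_const
      (slit_aux hy le_rfl zero_le_one)).tendsto.mono_left nhdsWithin_le_nhds
  have := (hP.mul hQ).mul hR
  simpa using this

lemma tendsto_one_aux {y : ℂ} (hy : ∀ t : ℝ, 1 ≤ t → y ≠ (t : ℂ)) (a b c : ℂ)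
    (hcb : 0 < (c - b).re) :
    Tendsto (fun t : ℝ => (t : ℂ) ^ b * (1 - (t : ℂ)) ^ (c - b) * (1 - y * (t : ℂ)) ^ (-a))
      (𝓝[<] (1:ℝ)) (𝓝 0) := by
  have hQ : Tendsto (fun t : ℝ => (1 - (t : ℂ)) ^ (c - b)) (𝓝[<] (1:ℝ)) (𝓝 0) := by
    rw [tendsto_zero_iff_norm_tendsto_zero]
    have heq : (fun t : ℝ => (1 - t) ^ (c - b).re) =ᶠ[𝓝[<] (1:ℝ)]
        fun t => ‖(1 - (t : ℂ)) ^ (c - b)‖ := by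
      filter_upwards [self_mem_nhdsWithin] with t ht
      have h1t : (0:ℝ) < 1 - t := by simp only [Set.mem_Iio] at ht; linarith
      rw [show (1 - (t : ℂ)) = (((1 - t : ℝ)) : ℂ) by push_cast; ring,
        Complex.norm_cpow_eq_rpow_re_of_pos h1t]
    refine Tendsto.congr' heq ?_
    have h := (Real.continuousAt_rpow_const 0 (c - b).re (Or.inr hcb.le)).tendsto
    rw [Real.zero_rpow (ne_of_gt hcb)] at h
    have hsub : Tendsto (fun t : ℝ => 1 - t) (𝓝[<] (1:ℝ)) (𝓝 0) := by
      have h2 : ContinuousAt (fun t : ℝ => 1 - t) 1 := continuousAt_const.sub continuousAt_id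
      have h3 := h2.tendsto.mono_left (nhdsWithin_le_nhds (s := Set.Iio (1:ℝ)))
      simpa using h3
    exact h.comp hsub
  have hP : Tendsto (fun t : ℝ => (t : ℂ) ^ b) (𝓝[<] (1:ℝ)) (𝓝 (((1:ℝ) : ℂ) ^ b)) := by
    have hbase : ContinuousAt (fun t : ℝ => (t : ℂ)) 1 := by fun_prop
    have h0 : (((1:ℝ):ℂ)) ∈ Complex.slitPlane := by
      rw [Complex.mem_slitPlane_iff]; left; simp
    exact (hbase.cpow continuousAt_const h0).tendsto.mono_left nhdsWithin_le_nhds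
  have hR : Tendsto (fun t : ℝ => (1 - y * (t : ℂ)) ^ (-a)) (𝓝[<] (1:ℝ))
      (𝓝 ((1 - y * ((1:ℝ) : ℂ)) ^ (-a))) := by
    have hbase : ContinuousAt (fun t : ℝ => 1 - y * (t : ℂ)) 1 := by fun_prop
    exact (hbase.cpow continuousAt_const
      (slit_aux hy zero_le_one le_rfl)).tendsto.mono_left nhdsWithin_le_nhds
  have := (hP.mul hQ).mul hR
  simpa using this

/-- for `Re(c) > Re(b) > 0` and `y ∉ [1,∞)`,
`𝓕(a,b,c;y) = (c/(c−b))·𝓕(a,b,c+1;y) + (a/(c−b))·y·𝓕(a+1,b+1,c+2;y)`. -/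
theorem stmt14 (a b c y : ℂ) (hb : 0 < b.re) (hbc : b.re < c.re)
    (hy : ∀ t : ℝ, 1 ≤ t → y ≠ (t : ℂ)) :
    calF a b c y =
      c / (c - b) * calF a b (c + 1) y + a / (c - b) * y * calF (a + 1) (b + 1) (c + 2) y := by
  have hcbre : 0 < (c - b).re := by simp only [Complex.sub_re]; linarith
  have hcb : c - b ≠ 0 := by
    intro h; rw [h] at hcbre; simp at hcbre
  have hI1 := integrable_aux hy a b c hb hbc
  have e2' : b.re < (c + 1).re := by
    simp only [Complex.add_re, Complex.one_re]; linarith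
  have e3' : 0 < (b + 1).re := by
    simp only [Complex.add_re, Complex.one_re]; linarith
  have e3'' : (b + 1).re < (c + 2).re := by
    simp only [Complex.add_re, Complex.one_re, Complex.re_ofNat]; linarith
  have hI2 := integrable_aux hy a b (c + 1) hb e2'
  have hI3 := integrable_aux hy (a + 1) (b + 1) (c + 2) e3' e3''
  have key : ∫ x in (0:ℝ)..1,
      (c * ((x : ℂ) ^ b * (1 - (x : ℂ)) ^ (c + 1 - b) * (1 - y * (x : ℂ)) ^ (-a) /
          ((x : ℂ) * (1 - (x : ℂ)))) +
        a * y * ((x : ℂ) ^ (b + 1) * (1 - (x : ℂ)) ^ (c + 2 - (b + 1)) *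
          (1 - y * (x : ℂ)) ^ (-(a + 1)) / ((x : ℂ) * (1 - (x : ℂ)))) -
        (c - b) * ((x : ℂ) ^ b * (1 - (x : ℂ)) ^ (c - b) * (1 - y * (x : ℂ)) ^ (-a) /
          ((x : ℂ) * (1 - (x : ℂ))))) = 0 := by
    have hint : IntervalIntegrable (fun x : ℝ =>
        c * ((x : ℂ) ^ b * (1 - (x : ℂ)) ^ (c + 1 - b) * (1 - y * (x : ℂ)) ^ (-a) /
            ((x : ℂ) * (1 - (x : ℂ)))) +
          a * y * ((x : ℂ) ^ (b + 1) * (1 - (x : ℂ)) ^ (c + 2 - (b + 1)) *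
            (1 - y * (x : ℂ)) ^ (-(a + 1)) / ((x : ℂ) * (1 - (x : ℂ)))) -
          (c - b) * ((x : ℂ) ^ b * (1 - (x : ℂ)) ^ (c - b) * (1 - y * (x : ℂ)) ^ (-a) /
            ((x : ℂ) * (1 - (x : ℂ))))) volume 0 1 :=
      ((hI2.const_mul c).add (hI3.const_mul (a * y))).sub (hI1.const_mul (c - b))
    have h := intervalIntegral.integral_eq_sub_of_hasDerivAt_of_tendsto
      (by norm_num : (0:ℝ) < 1) (fa := (0:ℂ)) (fb := (0:ℂ))
      (fun x hx => hasDeriv_aux hy a b c hx) hint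
      (tendsto_zero_aux hy a b c hb) (tendsto_one_aux hy a b c hcbre)
    rw [h]; ring
  rw [intervalIntegral.integral_sub ((hI2.const_mul c).add (hI3.const_mul (a * y)))
    (hI1.const_mul (c - b)), intervalIntegral.integral_add (hI2.const_mul c)
    (hI3.const_mul (a * y)), intervalIntegral.integral_const_mul,
    intervalIntegral.integral_const_mul, intervalIntegral.integral_const_mul] at key
  have hgoal : (c - b) * calF a b c y =
      c * calF a b (c + 1) y + a * y * calF (a + 1) (b + 1) (c + 2) y := by
    unfold calF
    linear_combination -key
  have h2 : calF a b c y =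
      (c * calF a b (c + 1) y + a * y * calF (a + 1) (b + 1) (c + 2) y) / (c - b) := by
    rw [eq_div_iff hcb]
    linear_combination hgoal
  rw [h2]
  ring
end

section
/- For Re(c) > Re(b) > 0 and |y| < 1, the integral ∫₀¹ x^{b−1}(1−x)^{c−b−1}(1−yx)^{−a} dx equals B(b, c−b) · ₂F₁(a,b,c;y), where ₂F₁(a,b,c;y) = Σ_{n≥0} ((a)ₙ(b)ₙ/(c)ₙ)·yⁿ/n! is the Gauss hypergeometric series and (x)ₙ is the rising Pochhammer symbol. -/
/-- The rising Pochhammer symbol `(a)ₙ = a(a+1)⋯(a+n−1)`. -/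
noncomputable def poch (a : ℂ) (n : ℕ) : ℂ := ∏ k ∈ Finset.range n, (a + (k : ℂ))

open Filter MeasureTheory Set Topology

noncomputable def pochR (A : ℝ) (n : ℕ) : ℝ := ∏ k ∈ Finset.range n, (A + k)

lemma pochR_pos {A : ℝ} (hA : 0 < A) (n : ℕ) : 0 < pochR A n :=
  Finset.prod_pos fun k _ => by positivity

lemma abs_poch_le (a : ℂ) (n : ℕ) : ‖poch a n‖ ≤ pochR (‖a‖) n := by
  rw [poch, norm_prod]
  refine Finset.prod_le_prod (fun k _ => norm_nonneg _) fun k _ => ?_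
  simpa using norm_add_le a k

lemma summable_pochR {A r : ℝ} (hA : 0 < A) (hr0 : 0 < r) (hr1 : r < 1) (m : ℕ) :
    Summable (fun n => pochR A (n + m) / n.factorial * r ^ n) := by
  apply summable_of_ratio_test_tendsto_lt_one hr1
  · filter_upwards with n
    have := pochR_pos hA (n + m)
    have : (0:ℝ) < pochR A (n+m) / n.factorial * r ^ n := by positivity
    exact ne_of_gt this
  · have key : ∀ n : ℕ, ‖pochR A (n+1+m) / (n+1).factorial * r ^ (n+1)‖ /
        ‖pochR A (n+m) / n.factorial * r ^ n‖ = (A + n + m) / (n+1) * r := by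
      intro n
      have hP := pochR_pos hA (n + m)
      have h1 : (0:ℝ) < pochR A (n+m) / n.factorial * r ^ n := by positivity
      have h2 : pochR A (n+1+m) = pochR A (n+m) * (A + n + m) := by
        rw [show n+1+m = (n+m)+1 by ring, pochR, Finset.prod_range_succ]
        rw [pochR]; push_cast; ring
      rw [Real.norm_of_nonneg (by have := pochR_pos hA (n+1+m); positivity),
        Real.norm_of_nonneg h1.le, h2, Nat.factorial_succ]
      have hfn : ((n.factorial : ℝ)) ≠ 0 := by positivity
      push_cast
      rw [pow_succ]
      field_simp
    refine Tendsto.congr (fun n => (key n).symm) ?_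
    have e : ∀ n : ℕ, (A + n + m) / ((n:ℝ)+1) * r = ((A + m - 1) / ((n:ℝ)+1) + 1) * r := by
      intro n
      have : ((n:ℝ)+1) ≠ 0 := by positivity
      field_simp
      ring
    rw [show (𝓝 r) = 𝓝 ((0 + 1) * r) by norm_num]
    refine Tendsto.congr (fun n => (e n).symm) (Tendsto.mul_const r (Tendsto.add_const 1 ?_))
    have h0 : Tendsto (fun n : ℕ => (A + m - 1) / (n:ℝ)) atTop (𝓝 0) :=
      tendsto_const_div_atTop_nhds_zero_nat _
    exact (h0.comp (tendsto_add_atTop_nat 1)).congr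
      (fun n => by simp only [Function.comp]; push_cast; ring_nf)

lemma poch_succ (a : ℂ) (n : ℕ) : poch a (n+1) = poch a n * (a + n) := by
  rw [poch, Finset.prod_range_succ]; rfl

lemma hasSum_binomial (a z : ℂ) (hz : ‖z‖ < 1) :
    HasSum (fun n => poch a n / n.factorial * z ^ n) ((1 - z) ^ (-a)) := by
  set A : ℝ := ‖a‖ + 1 with hA
  have hA0 : 0 < A := by positivity
  set r : ℝ := (‖z‖ + 1) / 2 with hr
  have hr0 : 0 < r := by positivity
  have hr1 : r < 1 := by simp only [hr]; linarith
  have hzr : ‖z‖ < r := by simp only [hr]; linarith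
  set t : Set ℂ := Metric.ball (0:ℂ) r with ht
  have hot : IsOpen t := Metric.isOpen_ball
  have hct : Convex ℝ t := convex_ball 0 r
  have hpt : IsPreconnected t := hct.isPreconnected
  have h0t : (0:ℂ) ∈ t := by simpa [ht, Metric.mem_ball] using hr0
  have hzt : z ∈ t := by
    simpa [ht, Metric.mem_ball, dist_zero_right] using hzr
  set c : ℕ → ℂ := fun n => poch a n / n.factorial with hc
  set g : ℕ → ℂ → ℂ := fun n w => c n * w ^ n with hgdef
  set g' : ℕ → ℂ → ℂ := fun n w => c n * (n * w ^ (n-1)) with hg'def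
  set u : ℕ → ℝ := fun n => pochR A n / n.factorial * n * r ^ (n-1) with hu
  have hcb : ∀ n, ‖c n‖ ≤ pochR A n / n.factorial := by
    intro n
    rw [hc]
    simp only [norm_div, Complex.norm_natCast]
    gcongr
    exact (abs_poch_le a n).trans (Finset.prod_le_prod
      (fun k _ => by positivity) fun k _ => by simp only [hA]; push_cast; linarith)
  have hus : Summable u := by
    rw [← summable_nat_add_iff 1]
    refine (summable_pochR hA0 hr0 hr1 1).congr fun n => ?_
    simp only [hu]
    rw [Nat.add_sub_cancel, Nat.factorial_succ]
    push_cast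
    field_simp
  have hg : ∀ n w, w ∈ t → HasDerivAt (g n) (g' n w) w := fun n w _ =>
    (hasDerivAt_pow n w).const_mul (c n)
  have hg' : ∀ n w, w ∈ t → ‖g' n w‖ ≤ u n := by
    intro n w hw
    have hwr : ‖w‖ ≤ r := by
      simpa [ht, Metric.mem_ball, dist_zero_right] using
        (Metric.mem_ball.mp hw).le
    have hP := (pochR_pos hA0 n).le
    simp only [hg'def, hu, norm_mul, Complex.norm_natCast,
      norm_pow]
    calc ‖c n‖ * ((n:ℝ) * ‖w‖ ^ (n-1))
        ≤ (pochR A n / n.factorial) * ((n:ℝ) * r ^ (n-1)) := by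
          apply mul_le_mul (hcb n) ?_ (by positivity) (by positivity)
          exact mul_le_mul_of_nonneg_left
            (pow_le_pow_left₀ (norm_nonneg w) hwr _) (by positivity)
      _ = pochR A n / n.factorial * n * r ^ (n-1) := by ring
  have hg0 : Summable (fun n => g n 0) := by
    apply summable_of_ne_finset_zero (s := {0})
    intro n hn
    simp only [hgdef]
    rw [zero_pow (by simpa using hn), mul_zero]
  have hSw : ∀ w ∈ t, Summable (fun n => g n w) := fun w hw =>
    summable_of_summable_hasDerivAt_of_isPreconnected hus hot hpt hg hg' h0t hg0 hw
  have hS'w : ∀ w ∈ t, Summable (fun n => g' n w) := fun w hw =>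
    Summable.of_norm_bounded hus fun n => hg' n w hw
  set S : ℂ → ℂ := fun w => ∑' n, g n w with hS
  have hSd : ∀ w ∈ t, HasDerivAt S (∑' n, g' n w) w := fun w hw =>
    hasDerivAt_tsum_of_isPreconnected hus hot hpt hg hg' h0t hg0 hw
  have key : ∀ w ∈ t, (1 - w) * (∑' n, g' n w) = a * S w := by
    intro w hw
    have h2 : ∀ n : ℕ, g' (n+1) w = a * g n w + w * g' n w := by
      intro n
      simp only [hg'def, hgdef, hc, Nat.add_sub_cancel]
      rcases n with _ | m
      · simp [poch_succ, poch]
      · have hfn : (((m+1).factorial : ℂ)) ≠ 0 := by exact_mod_cast (m+1).factorial_ne_zero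
        have hm2 : ((m:ℂ)+1+1) ≠ 0 := by
          have := Nat.cast_add_one_ne_zero (R := ℂ) (m+1); push_cast at this; exact this
        rw [Nat.succ_sub_one, poch_succ, Nat.factorial_succ (m+1)]
        push_cast
        field_simp
        ring
    have h1 : ∑' n, g' n w = a * S w + w * ∑' n, g' n w := by
      conv_lhs => rw [Summable.tsum_eq_zero_add (hS'w w hw)]
      have h3 : ∑' n, g' (n+1) w = a * S w + w * ∑' n, g' n w := by
        calc ∑' n, g' (n+1) w = ∑' n, (a * g n w + w * g' n w) := tsum_congr h2
          _ = a * S w + w * ∑' n, g' n w := by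
              rw [Summable.tsum_add ((hSw w hw).mul_left a) ((hS'w w hw).mul_left w),
                tsum_mul_left, tsum_mul_left]
      have h4 : g' 0 w = 0 := by simp [hg'def]
      rw [h4, zero_add, h3]
    linear_combination h1
  set F : ℂ → ℂ := fun w => (1 - w)^a * S w with hF
  have hwlt : ∀ w ∈ t, 0 < (1 - w).re ∧ (1 - w) ≠ 0 := by
    intro w hw
    have habs : ‖w‖ < r := by
      simpa [ht, Metric.mem_ball, dist_zero_right] using hw
    have hre : |w.re| ≤ ‖w‖ := Complex.abs_re_le_norm w
    have h1 : w.re < 1 := by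
      have := abs_lt.mp (lt_of_le_of_lt hre (habs.trans hr1))
      linarith [this.2]
    have hpos : 0 < (1 - w).re := by simp [Complex.sub_re]; linarith
    exact ⟨hpos, fun h => by rw [h] at hpos; simp at hpos⟩
  have hFd : ∀ w ∈ t, HasDerivAt F 0 w := by
    intro w hw
    obtain ⟨hwre, hne⟩ := hwlt w hw
    have h1w : (1 - w) ∈ Complex.slitPlane := Complex.mem_slitPlane_iff.mpr (Or.inl hwre)
    have d1 : HasDerivAt (fun w : ℂ => (1 - w)^a) (a * (1-w)^(a-1) * (-1)) w :=
      ((hasDerivAt_id w).const_sub 1).cpow_const h1w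
    have d2 := d1.mul (hSd w hw)
    refine d2.congr_deriv ?_
    symm
    have hsplit : (1 - w)^a = (1 - w)^(a-1) * (1 - w) := by
      conv_lhs => rw [show a = (a-1) + 1 by ring]
      rw [Complex.cpow_add _ _ hne, Complex.cpow_one]
    rw [hsplit]
    linear_combination (-((1 - w):ℂ)^(a-1)) * (key w hw)
  have hconst : F z = F 0 := by
    have h := Convex.norm_image_sub_le_of_norm_hasDerivWithin_le (C := 0)
      (f' := fun _ => (0:ℂ)) (fun w hw => (hFd w hw).hasDerivWithinAt)
      (fun w hw => by simp) hct h0t hzt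
    rw [zero_mul] at h
    exact sub_eq_zero.mp (norm_le_zero_iff.mp h)
  have hS0 : S 0 = 1 := by
    rw [hS]
    simp only
    rw [tsum_eq_single 0 (fun n hn => by simp [hgdef, zero_pow hn])]
    simp [hgdef, hc, poch]
  have hF0 : F 0 = 1 := by
    simp only [hF, hS0]
    norm_num [Complex.one_cpow]
  have hmul : (1 - z)^a * S z = 1 := by
    have h := hconst; rw [hF0] at h; exact h
  have hSz : S z = (1 - z)^(-a) := by
    rw [Complex.cpow_neg]
    exact eq_inv_of_mul_eq_one_right hmul
  have hfin := (hSw z hzt).hasSum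
  have hval : (∑' n, g n z) = (1 - z)^(-a) := hSz
  rw [hval] at hfin
  simpa only [hgdef, hc] using hfin

lemma poch_ne_zero {s : ℂ} (hs : 0 < s.re) (n : ℕ) : poch s n ≠ 0 := by
  rw [poch]
  apply Finset.prod_ne_zero_iff.mpr
  intro k _ h
  have hp : 0 < (s + (k:ℂ)).re := by
    simp only [Complex.add_re, Complex.natCast_re]
    positivity
  rw [h] at hp
  simp at hp

lemma Gamma_add_nat {s : ℂ} (hs : 0 < s.re) (n : ℕ) :
    Complex.Gamma (s + n) = poch s n * Complex.Gamma s := by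
  induction n with
  | zero => simp [poch]
  | succ m ih =>
    have hne : s + (m:ℂ) ≠ 0 := by
      intro h
      have hp : 0 < (s + (m:ℂ)).re := by
        simp only [Complex.add_re, Complex.natCast_re]; positivity
      rw [h] at hp; simp at hp
    have : s + ((m+1 : ℕ):ℂ) = (s + m) + 1 := by push_cast; ring
    rw [this, Complex.Gamma_add_one _ hne, ih, poch_succ]
    ring


/-- for `Re(c) > Re(b) > 0` and `|y| < 1`,
`∫₀¹ x^{b−1}(1−x)^{c−b−1}(1−yx)^{−a} dx = B(b, c−b) · ₂F₁(a,b,c;y)`, with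
`₂F₁(a,b,c;y) = Σₙ ((a)ₙ(b)ₙ/(c)ₙ) yⁿ/n!` and `B(x,y) = Γ(x)Γ(y)/Γ(x+y)`. -/
theorem stmt15 (a b c y : ℂ) (hb : 0 < b.re) (hbc : b.re < c.re)
    (hy : ‖y‖ < 1) :
    ∫ x in (0:ℝ)..1,
        (x : ℂ) ^ (b - 1) * (1 - (x : ℂ)) ^ (c - b - 1) * (1 - y * (x : ℂ)) ^ (-a) =
      (Complex.Gamma b * Complex.Gamma (c - b) / Complex.Gamma c) *
        ∑' n : ℕ, poch a n * poch b n / poch c n * y ^ n / (n.factorial : ℂ) := by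
  have hcbre : 0 < (c - b).re := by simp only [Complex.sub_re]; linarith
  have hc0 : 0 < c.re := lt_trans hb hbc
  have hΓc : Complex.Gamma c ≠ 0 := Complex.Gamma_ne_zero_of_re_pos hc0
  set k : ℕ → ℂ := fun n => poch a n / n.factorial * y ^ n with hk
  set G : ℕ → ℝ → ℂ :=
    fun n x => k n * ((x:ℂ) ^ (b + n - 1) * (1 - (x:ℂ)) ^ (c - b - 1)) with hG
  have hbn : ∀ n : ℕ, 0 < (b + (n:ℂ)).re := by
    intro n
    simp only [Complex.add_re, Complex.natCast_re]
    positivity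
  have hGint : ∀ n, MeasureTheory.IntegrableOn (G n) (Set.Ioc 0 1) := by
    intro n
    have h := Complex.betaIntegral_convergent (hbn n) hcbre
    rw [intervalIntegrable_iff_integrableOn_Ioc_of_le zero_le_one] at h
    exact h.const_mul (k n)
  have hbase : MeasureTheory.IntegrableOn
      (fun x : ℝ => (x:ℂ) ^ (b - 1) * (1 - (x:ℂ)) ^ (c - b - 1)) (Set.Ioc 0 1) := by
    have h := Complex.betaIntegral_convergent hb hcbre
    rwa [intervalIntegrable_iff_integrableOn_Ioc_of_le zero_le_one] at h
  set C : ℝ := ∫ x in Set.Ioc (0:ℝ) 1, ‖(x:ℂ) ^ (b - 1) * (1 - (x:ℂ)) ^ (c - b - 1)‖ with hC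
  have hCnn : 0 ≤ C := MeasureTheory.integral_nonneg fun x => norm_nonneg _
  have hnormle : ∀ n, (∫ x in Set.Ioc (0:ℝ) 1, ‖G n x‖) ≤ ‖k n‖ * C := by
    intro n
    have hmono : ∀ x ∈ Set.Ioc (0:ℝ) 1, ‖G n x‖ ≤
        ‖k n‖ * ‖(x:ℂ) ^ (b - 1) * (1 - (x:ℂ)) ^ (c - b - 1)‖ := by
      intro x hx
      obtain ⟨hx0, hx1⟩ := hx
      simp only [hG, norm_mul]
      gcongr
      rw [Complex.norm_cpow_eq_rpow_re_of_pos hx0, Complex.norm_cpow_eq_rpow_re_of_pos hx0]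
      apply Real.rpow_le_rpow_of_exponent_ge hx0 hx1
      simp only [Complex.sub_re, Complex.add_re, Complex.natCast_re, Complex.one_re]
      linarith [Nat.cast_nonneg (α := ℝ) n]
    calc (∫ x in Set.Ioc (0:ℝ) 1, ‖G n x‖)
        ≤ ∫ x in Set.Ioc (0:ℝ) 1,
            ‖k n‖ * ‖(x:ℂ) ^ (b - 1) * (1 - (x:ℂ)) ^ (c - b - 1)‖ :=
          MeasureTheory.setIntegral_mono_on (hGint n).norm
            (hbase.norm.const_mul _) measurableSet_Ioc hmono
      _ = ‖k n‖ * C := by rw [MeasureTheory.integral_const_mul]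
  have hsum : Summable (fun n => ∫ x in Set.Ioc (0:ℝ) 1, ‖G n x‖) := by
    set A : ℝ := ‖a‖ + 1 with hA
    have hA0 : 0 < A := by positivity
    set r : ℝ := (‖y‖ + 1) / 2 with hr
    have hr0 : 0 < r := by positivity
    have hr1 : r < 1 := by simp only [hr]; linarith
    have hyr : ‖y‖ ≤ r := by simp only [hr]; linarith
    have hmaj : Summable (fun n => pochR A n / n.factorial * r ^ n * C) := by
      refine Summable.mul_right C ?_
      exact (summable_pochR hA0 hr0 hr1 0).congr fun n => by rw [Nat.add_zero]
    refine hmaj.of_nonneg_of_le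
      (fun n => MeasureTheory.integral_nonneg fun x => norm_nonneg _) (fun n => ?_)
    refine (hnormle n).trans ?_
    have hkb : ‖k n‖ ≤ pochR A n / n.factorial * r ^ n := by
      simp only [hk, norm_mul, norm_div, norm_pow, Complex.norm_natCast]
      have h1 : ‖poch a n‖ ≤ pochR A n := (abs_poch_le a n).trans
        (Finset.prod_le_prod (fun i _ => by positivity)
          fun i _ => by simp only [hA]; push_cast; linarith)
      have h2 : ‖y‖ ^ n ≤ r ^ n := pow_le_pow_left₀ (norm_nonneg y) hyr n
      have h3 : ‖poch a n‖ / n.factorial ≤ pochR A n / n.factorial := by gcongr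
      exact mul_le_mul h3 h2 (by positivity)
        (div_nonneg (pochR_pos hA0 n).le (by positivity))
    gcongr
  have hswap := MeasureTheory.integral_tsum_of_summable_integral_norm hGint hsum
  rw [intervalIntegral.integral_of_le zero_le_one]
  have hEq : ∀ x ∈ Set.Ioc (0:ℝ) 1,
      (x:ℂ) ^ (b - 1) * (1 - (x:ℂ)) ^ (c - b - 1) * (1 - y * (x:ℂ)) ^ (-a) =
        ∑' n, G n x := by
    intro x hx
    obtain ⟨hx0, hx1⟩ := hx
    have hx0' : (x:ℂ) ≠ 0 := by exact_mod_cast ne_of_gt hx0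
    have hyx : ‖y * (x:ℂ)‖ < 1 := by
      rw [norm_mul, Complex.norm_real, Real.norm_eq_abs, abs_of_pos hx0]
      calc ‖y‖ * x ≤ ‖y‖ * 1 :=
            mul_le_mul_of_nonneg_left hx1 (norm_nonneg y)
        _ < 1 := by rwa [mul_one]
    have hbs := (hasSum_binomial a (y * (x:ℂ)) hyx).mul_left
      ((x:ℂ) ^ (b - 1) * (1 - (x:ℂ)) ^ (c - b - 1))
    have hfe : (fun n : ℕ => (x:ℂ) ^ (b - 1) * (1 - (x:ℂ)) ^ (c - b - 1) *
        (poch a n / n.factorial * (y * (x:ℂ)) ^ n)) = fun n => G n x := by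
      funext n
      simp only [hG, hk]
      rw [mul_pow, show b + (n:ℂ) - 1 = (b - 1) + (n:ℂ) by ring,
        Complex.cpow_add _ _ hx0', Complex.cpow_natCast]
      ring
    rw [hfe] at hbs
    exact hbs.tsum_eq.symm
  rw [MeasureTheory.setIntegral_congr_fun measurableSet_Ioc hEq, ← hswap]
  have hint : ∀ n : ℕ, (∫ x in Set.Ioc (0:ℝ) 1, G n x) =
      (Complex.Gamma b * Complex.Gamma (c - b) / Complex.Gamma c) *
        (poch a n * poch b n / poch c n * y ^ n / (n.factorial : ℂ)) := by
    intro n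
    have h1 : (∫ x in Set.Ioc (0:ℝ) 1, G n x) =
        k n * Complex.betaIntegral (b + n) (c - b) := by
      rw [MeasureTheory.integral_const_mul, Complex.betaIntegral,
        intervalIntegral.integral_of_le zero_le_one]
    have hcn : 0 < (c + (n:ℂ)).re := by
      simp only [Complex.add_re, Complex.natCast_re]; positivity
    have hΓcn : Complex.Gamma (c + n) ≠ 0 := Complex.Gamma_ne_zero_of_re_pos hcn
    have hβ : Complex.betaIntegral (b + n) (c - b) =
        Complex.Gamma (b + n) * Complex.Gamma (c - b) / Complex.Gamma (c + n) := by
      have h2 := Complex.Gamma_mul_Gamma_eq_betaIntegral (hbn n) hcbre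
      rw [show b + (n:ℂ) + (c - b) = c + n by ring] at h2
      rw [eq_div_iff hΓcn, mul_comm (Complex.betaIntegral _ _), ← h2]
    have hΓb : Complex.Gamma (b + n) = poch b n * Complex.Gamma b := Gamma_add_nat hb n
    have hΓcn2 : Complex.Gamma (c + n) = poch c n * Complex.Gamma c := Gamma_add_nat hc0 n
    have hpc : poch c n ≠ 0 := poch_ne_zero hc0 n
    have hfn : ((n.factorial : ℂ)) ≠ 0 := by exact_mod_cast n.factorial_ne_zero
    rw [h1, hβ, hΓb, hΓcn2, hk]
    field_simp
  rw [tsum_congr hint, tsum_mul_left]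
end
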